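/- arXiv:1608.08489 — 3 statements merged into one kernel-verified Lean document; each statement's English description precedes it below -/
import Mathlib

section
/- The map Fixed_M, which sends an ordered partition P to the meet of P with a fixed choice of ordered orbit partition of the pointwise stabilizer in M of the singleton cells of P, satisfies Fixed_M(P) is finer than P and Fixed_M(P^g) = (Fixed_M(P))^g for all g in the normalizer context considered; in particular Fixed_M is a refiner. -/
variable {Ω : Type*} [DecidableEq Ω] [Fintype Ω]

/-- The action of a permutation on an ordered partition: apply `g` to every cell. -/
def actP (P : List (Finset Ω)) (g : Equiv.Perm Ω) : List (Finset Ω) :=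
  P.map (Finset.image g)

/-- The meet of two ordered partitions. -/
def meetP (P Q : List (Finset Ω)) : List (Finset Ω) :=
  (P.flatMap (fun Δ => Q.map (fun Δ' => Δ ∩ Δ'))).filter (fun Δ => Δ.Nonempty)

/-- `Q` is finer than `P`. -/
def Finer (Q P : List (Finset Ω)) : Prop :=
  ∀ Δ ∈ Q, ∃ Δ' ∈ P, Δ ⊆ Δ'

/-- The points lying in singleton cells of `P`. -/
def singPts (P : List (Finset Ω)) : Set Ω := {a | ({a} : Finset Ω) ∈ P}

/-- The pointwise stabilizer in `M` of the points in singleton cells of `P`. -/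
def ptStab (M : Subgroup (Equiv.Perm Ω)) (P : List (Finset Ω)) : Subgroup (Equiv.Perm Ω) :=
  M ⊓ ⨅ a ∈ singPts P, MulAction.stabilizer (Equiv.Perm Ω) a

/-- `O` is an ordered orbit partition for the subgroup `N`: its cells are exactly the
orbits of `N` on `Ω`, listed without repetition in some order. -/
def IsOrbPart (N : Subgroup (Equiv.Perm Ω)) (O : List (Finset Ω)) : Prop :=
  O.Nodup ∧ (∀ Δ ∈ O, ∃ a : Ω, (Δ : Set Ω) = {γ | ∃ h ∈ N, h a = γ}) ∧
    ∀ a : Ω, ∃ Δ ∈ O, (Δ : Set Ω) = {γ | ∃ h ∈ N, h a = γ}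

-- basic actP lemmas
lemma actP_one (P : List (Finset Ω)) : actP P 1 = P := by
  have h1 : (Finset.image (⇑(1 : Equiv.Perm Ω)) : Finset Ω → Finset Ω) = id := by
    funext s; simp
  simp only [actP, h1, List.map_id]

lemma actP_actP (P : List (Finset Ω)) (g h : Equiv.Perm Ω) :
    actP (actP P g) h = actP P (h * g) := by
  simp [actP, List.map_map, Function.comp, Finset.image_image]

lemma list_map_eq_self_of {α : Type*} {l : List α} {f : α → α} (h : ∀ x ∈ l, f x = x) :
    l.map f = l := by
  induction l with
  | nil => rfl
  | cons a t ih =>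
    simp only [List.map_cons]
    rw [h a (by simp), ih (fun x hx => h x (by simp [hx]))]

lemma list_of_map_eq_self {α : Type*} {l : List α} {f : α → α} (h : l.map f = l) :
    ∀ x ∈ l, f x = x := by
  induction l with
  | nil => simp
  | cons a t ih =>
    simp only [List.map_cons, List.cons.injEq] at h
    intro x hx
    rcases List.mem_cons.mp hx with rfl | hx
    · exact h.1
    · exact ih h.2 x hx

lemma meetP_act (P Q : List (Finset Ω)) (g : Equiv.Perm Ω) :
    actP (meetP P Q) g = meetP (actP P g) (actP Q g) := by
  unfold meetP actP
  rw [List.flatMap_map]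
  have hfilter : ∀ (l : List (Finset Ω)),
      (l.filter (fun Δ => Δ.Nonempty)).map (Finset.image g)
        = (l.map (Finset.image g)).filter (fun Δ => Δ.Nonempty) := by
    intro l
    induction l with
    | nil => rfl
    | cons a t ih =>
      by_cases ha : a.Nonempty
      · have : (Finset.image (⇑g) a).Nonempty := ha.image _
        simp [List.filter, ha, this, ih]
      · have : ¬ (Finset.image (⇑g) a).Nonempty := by
          simpa [Finset.image_nonempty] using ha
        simp [List.filter, ha, this, ih]
  rw [hfilter, List.map_flatMap]
  have key : (fun Δ => List.map (Finset.image ⇑g) (List.map (fun Δ' => Δ ∩ Δ') Q))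
      = (fun Δ => List.map (fun Δ' => Finset.image (⇑g) Δ ∩ Δ') (List.map (Finset.image ⇑g) Q)) := by
    funext Δ
    rw [List.map_map, List.map_map]
    congr 1
    funext Δ'
    simp [Function.comp, Finset.image_inter _ _ g.injective]
  rw [key]

lemma finer_meetP (P Q : List (Finset Ω)) : Finer (meetP P Q) P := by
  intro Δ hΔ
  rw [meetP, List.mem_filter] at hΔ
  obtain ⟨hΔ, -⟩ := hΔ
  rw [List.mem_flatMap] at hΔ
  obtain ⟨Δ₁, h1, h2⟩ := hΔ
  rw [List.mem_map] at h2
  obtain ⟨Δ₂, -, rfl⟩ := h2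
  exact ⟨Δ₁, h1, Finset.inter_subset_left⟩

-- orbit partition
noncomputable def orbF (N : Subgroup (Equiv.Perm Ω)) (a : Ω) : Finset Ω :=
  Set.Finite.toFinset (Set.toFinite {γ | ∃ h ∈ N, h a = γ})

lemma coe_orbF (N : Subgroup (Equiv.Perm Ω)) (a : Ω) :
    (orbF N a : Set Ω) = {γ | ∃ h ∈ N, h a = γ} := Set.Finite.coe_toFinset _

noncomputable def orbList (N : Subgroup (Equiv.Perm Ω)) : List (Finset Ω) :=
  (Finset.univ.image (orbF N)).toList

lemma isOrbPart_orbList (N : Subgroup (Equiv.Perm Ω)) : IsOrbPart N (orbList N) := by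
  refine ⟨Finset.nodup_toList _, ?_, ?_⟩
  · intro Δ hΔ
    rw [orbList, Finset.mem_toList, Finset.mem_image] at hΔ
    obtain ⟨a, -, rfl⟩ := hΔ
    exact ⟨a, coe_orbF N a⟩
  · intro a
    exact ⟨orbF N a, by rw [orbList, Finset.mem_toList]; exact Finset.mem_image_of_mem _ (Finset.mem_univ a), coe_orbF N a⟩

lemma mem_ptStab {M : Subgroup (Equiv.Perm Ω)} {P : List (Finset Ω)} {h : Equiv.Perm Ω} :
    h ∈ ptStab M P ↔ h ∈ M ∧ ∀ a ∈ singPts P, h a = a := by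
  simp [ptStab, Subgroup.mem_iInf, MulAction.mem_stabilizer_iff, Equiv.Perm.smul_def]

lemma mem_singPts_act {P : List (Finset Ω)} {g : Equiv.Perm Ω} {a : Ω} :
    a ∈ singPts (actP P g) ↔ g⁻¹ a ∈ singPts P := by
  simp only [singPts, Set.mem_setOf_eq, actP, List.mem_map]
  constructor
  · rintro ⟨Δ, hΔ, hΔ'⟩
    have : Δ = {g⁻¹ a} := by
      have := congrArg (Finset.image (⇑g⁻¹)) hΔ'
      rwa [Finset.image_image, Finset.image_singleton,
        (by ext x; simp : (⇑g⁻¹ ∘ ⇑g) = id), Finset.image_id] at this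
    rwa [this] at hΔ
  · intro hΔ
    exact ⟨{g⁻¹ a}, hΔ, by simp⟩

lemma ptStab_act {M : Subgroup (Equiv.Perm Ω)} {P : List (Finset Ω)} {g : Equiv.Perm Ω}
    (hg : g ∈ M) (h : Equiv.Perm Ω) :
    h ∈ ptStab M (actP P g) ↔ g⁻¹ * h * g ∈ ptStab M P := by
  rw [mem_ptStab, mem_ptStab]
  constructor
  · rintro ⟨hM, hfix⟩
    refine ⟨mul_mem (mul_mem (inv_mem hg) hM) hg, fun b hb => ?_⟩
    have : h (g b) = g b := by
      refine hfix (g b) ?_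
      rw [mem_singPts_act]; simpa using hb
    simp [Equiv.Perm.mul_apply, this]
  · rintro ⟨hM, hfix⟩
    have hM' : h ∈ M := by
      have := mul_mem (mul_mem hg hM) (inv_mem hg)
      simpa [mul_assoc] using this
    refine ⟨hM', fun a ha => ?_⟩
    rw [mem_singPts_act] at ha
    have := hfix _ ha
    simp only [Equiv.Perm.mul_apply] at this
    have := congrArg g this
    simpa using this

lemma orbit_conj {N N' : Subgroup (Equiv.Perm Ω)} {g : Equiv.Perm Ω}
    (hN : ∀ h, h ∈ N' ↔ g⁻¹ * h * g ∈ N) (a : Ω) :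
    (⇑g) '' {γ | ∃ h ∈ N, h a = γ} = {γ | ∃ h ∈ N', h (g a) = γ} := by
  ext γ
  simp only [Set.mem_image, Set.mem_setOf_eq]
  constructor
  · rintro ⟨δ, ⟨h, hh, rfl⟩, rfl⟩
    refine ⟨g * h * g⁻¹, ?_, by simp [Equiv.Perm.mul_apply]⟩
    rw [hN]
    have : g⁻¹ * (g * h * g⁻¹) * g = h := by group
    rwa [this]
  · rintro ⟨h, hh, rfl⟩
    exact ⟨(g⁻¹ * h * g) a, ⟨g⁻¹ * h * g, (hN h).1 hh, rfl⟩, by simp [Equiv.Perm.mul_apply]⟩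

lemma isOrbPart_act {N N' : Subgroup (Equiv.Perm Ω)} {O : List (Finset Ω)} {g : Equiv.Perm Ω}
    (hO : IsOrbPart N O) (hN : ∀ h, h ∈ N' ↔ g⁻¹ * h * g ∈ N) :
    IsOrbPart N' (actP O g) := by
  obtain ⟨hnd, horb, hall⟩ := hO
  refine ⟨hnd.map (Finset.image_injective g.injective), ?_, ?_⟩
  · intro Δ hΔ
    rw [actP, List.mem_map] at hΔ
    obtain ⟨Δ₀, h0, rfl⟩ := hΔ
    obtain ⟨a, ha⟩ := horb Δ₀ h0
    refine ⟨g a, ?_⟩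
    rw [Finset.coe_image, ha, orbit_conj hN]
  · intro a
    obtain ⟨Δ₀, h0, ha⟩ := hall (g⁻¹ a)
    refine ⟨Finset.image g Δ₀, List.mem_map_of_mem (f := Finset.image g) h0, ?_⟩
    rw [Finset.coe_image, ha, orbit_conj hN]
    simp

-- fixed point lemma
lemma act_fix {M : Subgroup (Equiv.Perm Ω)} {R : List (Finset Ω)} {h : Equiv.Perm Ω}
    (hM : h ∈ M) (hfix : actP R h = R) :
    actP (meetP R (orbList (ptStab M R))) h = meetP R (orbList (ptStab M R)) := by
  set N := ptStab M R with hNdef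
  have hN : h ∈ N := by
    rw [hNdef, mem_ptStab]
    refine ⟨hM, fun a ha => ?_⟩
    have := list_of_map_eq_self hfix _ ha
    rw [Finset.image_singleton] at this
    exact Finset.singleton_injective this
  have horb : actP (orbList N) h = orbList N := by
    apply list_map_eq_self_of
    intro Δ hΔ
    obtain ⟨a, ha⟩ := (isOrbPart_orbList N).2.1 Δ hΔ
    apply Finset.coe_injective
    rw [Finset.coe_image, ha]
    ext γ
    simp only [Set.mem_image, Set.mem_setOf_eq]
    constructor
    · rintro ⟨δ, ⟨k, hk, rfl⟩, rfl⟩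
      exact ⟨h * k, mul_mem hN hk, by simp [Equiv.Perm.mul_apply]⟩
    · rintro ⟨k, hk, rfl⟩
      exact ⟨(h⁻¹ * k) a, ⟨h⁻¹ * k, mul_mem (inv_mem hN) hk, rfl⟩, by simp [Equiv.Perm.mul_apply]⟩
  rw [meetP_act, hfix, horb]

-- setoid, representative
def mySetoid (M : Subgroup (Equiv.Perm Ω)) : Setoid (List (Finset Ω)) where
  r P Q := ∃ g ∈ M, actP Q g = P
  iseqv := by
    constructor
    · exact fun P => ⟨1, one_mem M, actP_one P⟩
    · rintro P Q ⟨g, hg, rfl⟩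
      exact ⟨g⁻¹, inv_mem hg, by rw [actP_actP, inv_mul_cancel, actP_one]⟩
    · rintro P Q S ⟨g, hg, rfl⟩ ⟨g', hg', rfl⟩
      exact ⟨g * g', mul_mem hg hg', (actP_actP S g' g).symm⟩

noncomputable def rep (M : Subgroup (Equiv.Perm Ω)) (P : List (Finset Ω)) : List (Finset Ω) :=
  Quotient.out (Quotient.mk (mySetoid M) P)

lemma rep_spec (M : Subgroup (Equiv.Perm Ω)) (P : List (Finset Ω)) :
    ∃ g ∈ M, actP (rep M P) g = P :=
  (mySetoid M).symm (Quotient.exact (Quotient.out_eq (Quotient.mk (mySetoid M) P)))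

lemma rep_act (M : Subgroup (Equiv.Perm Ω)) (P : List (Finset Ω)) {g : Equiv.Perm Ω}
    (hg : g ∈ M) : rep M (actP P g) = rep M P := by
  unfold rep
  congr 1
  exact Quotient.sound ⟨g, hg, rfl⟩

noncomputable def gsel (M : Subgroup (Equiv.Perm Ω)) (P : List (Finset Ω)) : Equiv.Perm Ω :=
  (rep_spec M P).choose

lemma gsel_mem (M : Subgroup (Equiv.Perm Ω)) (P : List (Finset Ω)) : gsel M P ∈ M :=
  (rep_spec M P).choose_spec.1

lemma gsel_spec (M : Subgroup (Equiv.Perm Ω)) (P : List (Finset Ω)) :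
    actP (rep M P) (gsel M P) = P :=
  (rep_spec M P).choose_spec.2

noncomputable def baseF (M : Subgroup (Equiv.Perm Ω)) (R : List (Finset Ω)) : List (Finset Ω) :=
  meetP R (orbList (ptStab M R))

noncomputable def fdef (M : Subgroup (Equiv.Perm Ω)) (P : List (Finset Ω)) : List (Finset Ω) :=
  actP (baseF M (rep M P)) (gsel M P)


/-- There is a map `Fixed_M` sending an ordered partition `P` to the meet of `P` with a
(fixed choice of) ordered orbit partition of the pointwise stabilizer in `M` of the
singleton cells of `P`, which satisfies `Fixed_M P ≼ P` and
`Fixed_M (P^g) = (Fixed_M P)^g` for all `g ∈ M`; in particular `Fixed_M` is a refiner. -/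
theorem fixed_is_refiner (M : Subgroup (Equiv.Perm Ω)) :
    ∃ f : List (Finset Ω) → List (Finset Ω),
      (∀ P, ∃ O, IsOrbPart (ptStab M P) O ∧ f P = meetP P O) ∧
      (∀ P, Finer (f P) P) ∧
      (∀ P, ∀ g ∈ M, f (actP P g) = actP (f P) g) := by
  refine ⟨fdef M, ?_, ?_, ?_⟩
  · -- first property
    intro P
    set R := rep M P with hR
    set g := gsel M P with hg
    have hgM : g ∈ M := gsel_mem M P
    have hgP : actP R g = P := gsel_spec M P
    refine ⟨actP (orbList (ptStab M R)) g, ?_, ?_⟩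
    · refine isOrbPart_act (isOrbPart_orbList _) ?_
      intro h
      rw [← hgP, ptStab_act hgM]
    · rw [fdef, baseF, meetP_act, hgP]
  · -- finer
    intro P
    have : fdef M P = meetP P (actP (orbList (ptStab M (rep M P))) (gsel M P)) := by
      rw [fdef, baseF, meetP_act, gsel_spec]
    rw [this]
    exact finer_meetP _ _
  · -- equivariance
    intro P g hg
    have hR : rep M (actP P g) = rep M P := rep_act M P hg
    have hg1M : gsel M (actP P g) ∈ M := gsel_mem M (actP P g)
    have hg2M : gsel M P ∈ M := gsel_mem M P
    have h1 : actP (rep M P) (gsel M (actP P g)) = actP P g := by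
      rw [← hR]; exact gsel_spec M (actP P g)
    have h2 : actP (rep M P) (gsel M P) = P := gsel_spec M P
    set g₁ := gsel M (actP P g)
    set g₂ := gsel M P
    set R := rep M P
    set h := g₁⁻¹ * (g * g₂) with hdef
    have hhM : h ∈ M := mul_mem (inv_mem hg1M) (mul_mem hg hg2M)
    have hfixR : actP R h = R := by
      have e1 : actP R (g * g₂) = actP R g₁ := by
        rw [← actP_actP, h2, h1]
      calc actP R h = actP (actP R (g * g₂)) g₁⁻¹ := by rw [actP_actP]
        _ = actP (actP R g₁) g₁⁻¹ := by rw [e1]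
        _ = actP R (g₁⁻¹ * g₁) := actP_actP _ _ _
        _ = R := by rw [inv_mul_cancel, actP_one]
    have hfixB : actP (baseF M R) h = baseF M R := act_fix hhM hfixR
    have hmul : g₁ * h = g * g₂ := by rw [hdef]; group
    calc fdef M (actP P g) = actP (baseF M R) g₁ := by rw [fdef, hR]
      _ = actP (actP (baseF M R) h) g₁ := by rw [hfixB]
      _ = actP (baseF M R) (g₁ * h) := actP_actP _ _ _
      _ = actP (baseF M R) (g * g₂) := by rw [hmul]
      _ = actP (actP (baseF M R) g₂) g := (actP_actP _ _ _).symm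
      _ = actP (fdef M P) g := rfl
end

section
/- If β ∈ α^H and the orbital graph Γ(H,Ω,(α,β)) has strictly more than n(n−2) arcs, where n = |α^H|, then for every pair of distinct points γ,δ ∈ α^H the pair (γ,δ) is an arc, i.e., Γ is the complete digraph on α^H. -/
variable {Ω : Type*} [Fintype Ω] [DecidableEq Ω]

/-- The arc set of the orbital graph of `H` with base-pair `(α, β)`:
`{(α^h, β^h) : h ∈ H}`. -/
def orbArcs (H : Subgroup (Equiv.Perm Ω)) (α β : Ω) : Set (Ω × Ω) :=
  {p | ∃ h ∈ H, h α = p.1 ∧ h β = p.2}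

/-- The orbit of `α` under `H`. -/
def orb (H : Subgroup (Equiv.Perm Ω)) (α : Ω) : Set Ω :=
  {γ | ∃ h ∈ H, h α = γ}

/-- The orbit of `β` under the stabilizer `H_α`. -/
def stabOrb (H : Subgroup (Equiv.Perm Ω)) (α β : Ω) : Set Ω :=
  {γ | ∃ h ∈ H, h α = α ∧ h β = γ}

lemma ncard_sprod (s t : Set Ω) : (s ×ˢ t).ncard = s.ncard * t.ncard := by
  classical
  rw [Set.ncard_eq_toFinset_card', Set.ncard_eq_toFinset_card', Set.ncard_eq_toFinset_card',
    Set.toFinset_prod, Finset.card_product]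

/-- If `β ∈ α^H` and `Γ(H,Ω,(α,β))` has strictly more than `n(n-2)` arcs, where
`n = |α^H|`, then `Γ` is the complete digraph on `α^H`. -/
theorem many_arcs_complete (H : Subgroup (Equiv.Perm Ω)) (α β : Ω)
    (hab : α ≠ β) (hβ : β ∈ orb H α)
    (harcs : (orb H α).ncard * ((orb H α).ncard - 2) < (orbArcs H α β).ncard) :
    ∀ γ ∈ orb H α, ∀ δ ∈ orb H α, γ ≠ δ → (γ, δ) ∈ orbArcs H α β := by
  by_contra hcon
  push_neg at hcon
  obtain ⟨γ, hγ, δ, hδ, hne, hnot⟩ := hcon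
  obtain ⟨g, hgH, hgα⟩ := hγ
  set ε : Ω := g⁻¹ δ with hε
  have hεorb : ε ∈ orb H α := by
    obtain ⟨k, hkH, hkα⟩ := hδ
    exact ⟨g⁻¹ * k, mul_mem (inv_mem hgH) hkH, by simp [hε, hkα]⟩
  have hεα : ε ≠ α := by
    intro h
    apply hne
    have : δ = g α := by
      have := congrArg g h
      simpa [hε] using this
    rw [this, hgα]
  -- the out-neighbourhood of α avoids α and ε
  have hsub : stabOrb H α β ⊆ orb H α \ {α, ε} := by
    rintro x ⟨h, hhH, hhα, hhβ⟩
    obtain ⟨k, hkH, hkα⟩ := hβ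
    refine ⟨⟨h * k, mul_mem hhH hkH, by simp [hkα, hhβ]⟩, ?_⟩
    simp only [Set.mem_insert_iff, Set.mem_singleton_iff, not_or]
    constructor
    · intro hx
      apply hab
      exact h.injective (by rw [hhα, hhβ, hx])
    · intro hx
      apply hnot
      refine ⟨g * h, mul_mem hgH hhH, ?_, ?_⟩
      · simp [hhα, hgα]
      · have : g (h β) = g ε := congrArg g (hhβ.trans hx)
        simpa [hε] using this
  -- a choice of transporting elements
  have hσ : ∀ x ∈ orb H α, ∃ h : Equiv.Perm Ω, h ∈ H ∧ h α = x := fun x hx => by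
    obtain ⟨h, h1, h2⟩ := hx; exact ⟨h, h1, h2⟩
  classical
  set σ : Ω → Equiv.Perm Ω := fun x =>
    if hx : x ∈ orb H α then (hσ x hx).choose else 1 with hσdef
  have hσspec : ∀ x ∈ orb H α, σ x ∈ H ∧ σ x α = x := by
    intro x hx
    simp only [hσdef, dif_pos hx]
    exact (hσ x hx).choose_spec
  -- the injection
  set f : Ω × Ω → Ω × Ω := fun p => (p.1, (σ p.1)⁻¹ p.2) with hf
  have hinj : Function.Injective f := by
    rintro ⟨a, b⟩ ⟨c, d⟩ hpq
    simp only [hf, Prod.mk.injEq] at hpq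
    obtain ⟨h1, h2⟩ := hpq
    subst h1
    exact Prod.mk.injEq .. ▸ ⟨rfl, (σ a)⁻¹.injective h2⟩
  have himg : f '' (orbArcs H α β) ⊆ (orb H α) ×ˢ (orb H α \ {α, ε}) := by
    rintro _ ⟨⟨a, b⟩, ⟨h, hhH, hha, hhb⟩, rfl⟩
    simp only at hha hhb
    have haorb : a ∈ orb H α := ⟨h, hhH, hha⟩
    obtain ⟨hσH, hσα⟩ := hσspec a haorb
    refine ⟨haorb, hsub ⟨(σ a)⁻¹ * h, mul_mem (inv_mem hσH) hhH, ?_, ?_⟩⟩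
    · show (σ a)⁻¹ (h α) = α
      rw [hha]
      exact Equiv.Perm.inv_eq_iff_eq.mpr hσα.symm
    · simp only [Equiv.Perm.mul_apply, hhb]
      rfl
  -- counting
  have hfin : ((orb H α) ×ˢ (orb H α \ {α, ε})).Finite := Set.toFinite _
  have h1 : (orbArcs H α β).ncard = (f '' (orbArcs H α β)).ncard :=
    (Set.ncard_image_of_injective _ hinj).symm
  have h2 : (f '' (orbArcs H α β)).ncard ≤ ((orb H α) ×ˢ (orb H α \ {α, ε})).ncard :=
    Set.ncard_le_ncard himg hfin
  have h3 : ((orb H α) ×ˢ (orb H α \ {α, ε})).ncard =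
      (orb H α).ncard * (orb H α \ {α, ε}).ncard := ncard_sprod ..
  have h4 : (orb H α \ {α, ε}).ncard = (orb H α).ncard - 2 := by
    rw [Set.ncard_diff (by
      intro x hx
      simp only [Set.mem_insert_iff, Set.mem_singleton_iff] at hx
      rcases hx with rfl | rfl
      · exact ⟨1, one_mem H, rfl⟩
      · exact hεorb) (Set.toFinite _)]
    rw [Set.ncard_pair (Ne.symm hεα)]
  rw [h1] at harcs
  rw [h4] at h3
  rw [h3] at h2
  exact absurd (lt_of_lt_of_le harcs h2) (lt_irrefl _)
end

section
/- If β ∉ α^H, then |β^{H_α}| ≤ |β^H|, with equality if and only if every pair (γ,δ) with γ ∈ α^H and δ ∈ β^H is an arc of the orbital graph Γ(H,Ω,(α,β)). -/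
variable {Ω : Type*} [Fintype Ω] [DecidableEq Ω]

/-- If `β ∉ α^H`, then `|β^{H_α}| ≤ |β^H|`, with equality iff every pair `(γ,δ)`
with `γ ∈ α^H` and `δ ∈ β^H` is an arc of `Γ(H,Ω,(α,β))`. -/
theorem stabOrb_card_le_diff_orbit (H : Subgroup (Equiv.Perm Ω)) (α β : Ω)
    (hβ : β ∉ orb H α) :
    (stabOrb H α β).ncard ≤ (orb H β).ncard ∧
      ((stabOrb H α β).ncard = (orb H β).ncard ↔
        ∀ γ ∈ orb H α, ∀ δ ∈ orb H β, (γ, δ) ∈ orbArcs H α β) := by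
  have hsub : stabOrb H α β ⊆ orb H β := by
    rintro x ⟨h, hH, _, hx⟩; exact ⟨h, hH, hx⟩
  have hfin : (orb H β).Finite := Set.toFinite _
  refine ⟨Set.ncard_le_ncard hsub hfin, ?_⟩
  constructor
  · intro hcard γ hγ δ hδ
    have heq : stabOrb H α β = orb H β :=
      Set.eq_of_subset_of_ncard_le hsub (le_of_eq hcard.symm) hfin
    obtain ⟨g, hgH, hgα⟩ := hγ
    obtain ⟨k, hkH, hkβ⟩ := hδ
    have : g⁻¹ δ ∈ orb H β := ⟨g⁻¹ * k, mul_mem (inv_mem hgH) hkH, by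
      simp [Equiv.Perm.mul_apply, hkβ]⟩
    rw [← heq] at this
    obtain ⟨h, hhH, hα, hβ'⟩ := this
    exact ⟨g * h, mul_mem hgH hhH, by
      simp [Equiv.Perm.mul_apply, hα, hgα], by
      simp [Equiv.Perm.mul_apply, hβ']⟩
  · intro hcond
    have heq : stabOrb H α β = orb H β := by
      refine Set.Subset.antisymm hsub ?_
      intro δ hδ
      obtain ⟨h, hhH, hα, hβ'⟩ := hcond α ⟨1, one_mem H, rfl⟩ δ hδ
      exact ⟨h, hhH, hα, hβ'⟩
    rw [heq]
end
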